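/- arXiv:2602.16497 — 5 statements merged into one kernel-verified Lean document; each statement's English description precedes it below -/
import Mathlib

section
/- Let n, d be positive natural numbers, W ∈ ℝ^{n×d}, θ* ∈ ℝ^d, ξ ∈ ℝⁿ, and y = Wθ* + ξ. Let J ⊆ {1,…,d} be the set of penalized coordinates and let λ > 0 satisfy λ ≥ (2/n)·‖Wᵀξ‖_∞. Suppose θ̂ ∈ ℝ^d minimizes the partially penalized Lasso objective θ ↦ (1/(2n))‖y − Wθ‖₂² + λ‖θ_J‖₁ over ℝ^d, where θ_J is the restriction of θ to the coordinates in J. Set S = {j ∈ J : θ*_j ≠ 0} ∪ Jᶜ and Δ = θ̂ − θ*. Then (1/n)‖WΔ‖₂² + λ‖Δ_{Sᶜ}‖₁ ≤ 3λ‖Δ_S‖₁; in particular Δ lies in the cone C(S,3), i.e. ‖Δ_{Sᶜ}‖₁ ≤ 3‖Δ_S‖₁. -/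
open Matrix Finset

/-- Basic inequality / cone membership for the partially penalized Lasso:
if `λ ≥ (2/n)‖Wᵀξ‖_∞` and `θ̂` minimizes `(1/(2n))‖y − Wθ‖₂² + λ‖θ_J‖₁`, then with
`S = {j ∈ J : θ*_j ≠ 0} ∪ Jᶜ` and `Δ = θ̂ − θ*`,
`(1/n)‖WΔ‖₂² + λ‖Δ_{Sᶜ}‖₁ ≤ 3λ‖Δ_S‖₁`, and in particular `‖Δ_{Sᶜ}‖₁ ≤ 3‖Δ_S‖₁`. -/
theorem lasso_basic_inequality_cone
    (n d : ℕ) (hn : 0 < n) (hd : 0 < d)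
    (W : Matrix (Fin n) (Fin d) ℝ) (θstar : Fin d → ℝ) (ξ : Fin n → ℝ)
    (y : Fin n → ℝ) (hy : y = W *ᵥ θstar + ξ)
    (J : Finset (Fin d)) (lam : ℝ) (hlam : 0 < lam)
    (hlam_ge : (2 / (n : ℝ)) * (⨆ j : Fin d, |(Wᵀ *ᵥ ξ) j|) ≤ lam)
    (θhat : Fin d → ℝ)
    (hmin : ∀ θ : Fin d → ℝ,
      (1 / (2 * (n : ℝ))) * (∑ i, ((y - W *ᵥ θhat) i) ^ 2) + lam * (∑ j ∈ J, |θhat j|)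
        ≤ (1 / (2 * (n : ℝ))) * (∑ i, ((y - W *ᵥ θ) i) ^ 2) + lam * (∑ j ∈ J, |θ j|))
    (S : Finset (Fin d)) (hS : S = (J.filter fun j => θstar j ≠ 0) ∪ Jᶜ)
    (Δ : Fin d → ℝ) (hΔ : Δ = θhat - θstar) :
    (1 / (n : ℝ)) * (∑ i, ((W *ᵥ Δ) i) ^ 2) + lam * (∑ j ∈ Sᶜ, |Δ j|)
        ≤ 3 * lam * (∑ j ∈ S, |Δ j|) ∧
    (∑ j ∈ Sᶜ, |Δ j|) ≤ 3 * (∑ j ∈ S, |Δ j|) := by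
  have hn' : (0:ℝ) < n := by exact_mod_cast hn
  set a := ∑ j ∈ S, |Δ j| with ha
  set b := ∑ j ∈ Sᶜ, |Δ j| with hb
  set Q := ∑ i, ((W *ᵥ Δ) i) ^ 2 with hQdef
  set T := ∑ j, (Wᵀ *ᵥ ξ) j * Δ j with hTdef
  set M := ⨆ j : Fin d, |(Wᵀ *ᵥ ξ) j| with hMdef
  have hQ0 : 0 ≤ Q := Finset.sum_nonneg fun i _ => sq_nonneg _
  have ha0 : 0 ≤ a := Finset.sum_nonneg fun j _ => abs_nonneg _
  have hb0 : 0 ≤ b := Finset.sum_nonneg fun j _ => abs_nonneg _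
  -- residual identity
  have hres : ∀ i, (y - W *ᵥ θhat) i = ξ i - (W *ᵥ Δ) i := by
    intro i
    subst hy hΔ
    simp [Matrix.mulVec_sub, Matrix.sub_apply, Matrix.add_apply, Pi.sub_apply, Pi.add_apply]
    ring
  have hres0 : ∀ i, (y - W *ᵥ θstar) i = ξ i := by
    intro i; subst hy; simp
  -- dot product identity
  have hT : ∑ i, ξ i * (W *ᵥ Δ) i = T := by
    have := Matrix.dotProduct_mulVec ξ W Δ
    rw [hTdef]
    simpa [dotProduct, Matrix.mulVec_transpose] using this
  -- expansion of squared residual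
  have hexp : ∑ i, ((y - W *ᵥ θhat) i) ^ 2 = (∑ i, (ξ i)^2) - 2 * T + Q := by
    have h1 : ∀ i, ((y - W *ᵥ θhat) i) ^ 2
        = (ξ i)^2 - 2 * (ξ i * (W *ᵥ Δ) i) + ((W *ᵥ Δ) i)^2 := by
      intro i; rw [hres i]; ring
    rw [Finset.sum_congr rfl fun i _ => h1 i]
    rw [Finset.sum_add_distrib, Finset.sum_sub_distrib, ← Finset.mul_sum, hT, hQdef]
  have hexp0 : ∑ i, ((y - W *ᵥ θstar) i) ^ 2 = ∑ i, (ξ i)^2 := by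
    exact Finset.sum_congr rfl fun i _ => by rw [hres0 i]
  -- sup bound
  have hMle : ∀ j, |(Wᵀ *ᵥ ξ) j| ≤ M := by
    intro j; rw [hMdef]
    exact le_ciSup (Set.Finite.bddAbove (Set.finite_range fun j => |(Wᵀ *ᵥ ξ) j|)) j
  have hM0 : 0 ≤ M := le_trans (abs_nonneg _) (hMle ⟨0, hd⟩)
  have hMlam : M ≤ (n : ℝ) * lam / 2 := by
    rw [le_div_iff₀ (by norm_num : (0:ℝ) < 2)]
    have h := mul_le_mul_of_nonneg_left hlam_ge (le_of_lt hn')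
    have : (n:ℝ) * (2 / (n:ℝ) * M) = 2 * M := by field_simp
    nlinarith
  -- ℓ1 split
  have habs : a + b = ∑ j, |Δ j| := Finset.sum_add_sum_compl S _
  -- T bound
  have hTb : T ≤ M * (a + b) := by
    calc T ≤ |T| := le_abs_self _
    _ ≤ ∑ j, |(Wᵀ *ᵥ ξ) j * Δ j| := Finset.abs_sum_le_sum_abs _ _
    _ ≤ ∑ j, M * |Δ j| := by
        refine Finset.sum_le_sum fun j _ => ?_
        rw [abs_mul]
        exact mul_le_mul_of_nonneg_right (hMle j) (abs_nonneg _)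
    _ = M * (a + b) := by rw [← Finset.mul_sum, habs]
  -- description of Sᶜ
  have hScEq : J.filter (fun j => θstar j = 0) = Sᶜ := by
    ext j
    simp only [Finset.mem_filter, Finset.mem_compl, hS, Finset.mem_union,
      Finset.mem_filter, Finset.mem_compl]
    tauto
  have hSsub : J.filter (fun j => θstar j ≠ 0) ⊆ S := by
    rw [hS]; exact Finset.subset_union_left
  -- penalty bound
  have hpen : (∑ j ∈ J, |θstar j|) - (∑ j ∈ J, |θhat j|) ≤ a - b := by
    have hsplit : ∀ g : Fin d → ℝ, ∑ j ∈ J, g j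
        = (∑ j ∈ J.filter (fun j => θstar j ≠ 0), g j) + ∑ j ∈ Sᶜ, g j := by
      intro g
      rw [← hScEq, ← Finset.sum_filter_add_sum_filter_not J (fun j => θstar j ≠ 0)]
      congr 1
      apply Finset.sum_congr _ fun _ _ => rfl
      ext j; simp [not_not]
    rw [hsplit (fun j => |θstar j|), hsplit (fun j => |θhat j|)]
    have h1 : (∑ j ∈ J.filter (fun j => θstar j ≠ 0), |θstar j|)
        - (∑ j ∈ J.filter (fun j => θstar j ≠ 0), |θhat j|) ≤ a := by
      rw [← Finset.sum_sub_distrib]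
      calc ∑ j ∈ J.filter (fun j => θstar j ≠ 0), (|θstar j| - |θhat j|)
          ≤ ∑ j ∈ J.filter (fun j => θstar j ≠ 0), |Δ j| := by
            refine Finset.sum_le_sum fun j _ => ?_
            subst hΔ
            calc |θstar j| - |θhat j| ≤ |θstar j - θhat j| := abs_sub_abs_le_abs_sub _ _
            _ = |(θhat - θstar) j| := by rw [Pi.sub_apply]; rw [abs_sub_comm]
      _ ≤ a := Finset.sum_le_sum_of_subset_of_nonneg hSsub fun j _ _ => abs_nonneg _
    have h2 : (∑ j ∈ Sᶜ, |θstar j|) - (∑ j ∈ Sᶜ, |θhat j|) = -b := by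
      rw [hb, ← Finset.sum_sub_distrib, ← Finset.sum_neg_distrib]
      refine Finset.sum_congr rfl fun j hj => ?_
      have hj' : θstar j = 0 := by
        rw [← hScEq] at hj
        exact (Finset.mem_filter.mp hj).2
      subst hΔ
      simp [Pi.sub_apply, hj']
    linarith
  -- basic inequality
  have hbasic := hmin θstar
  rw [hexp, hexp0] at hbasic
  set c : ℝ := 1 / (2 * (n:ℝ)) with hc
  have hc0 : 0 < c := by positivity
  have hcQ : c * Q ≤ (lam / 2) * (a + b) + lam * (a - b) := by
    have h3 : 2 * c * T ≤ (lam / 2) * (a + b) := by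
      have h4 : T ≤ ((n:ℝ) * lam / 2) * (a + b) :=
        hTb.trans (mul_le_mul_of_nonneg_right hMlam (by linarith))
      have h5 : 2 * c * T ≤ 2 * c * (((n:ℝ) * lam / 2) * (a + b)) :=
        mul_le_mul_of_nonneg_left h4 (by positivity)
      have h6 : 2 * c * (((n:ℝ) * lam / 2) * (a + b)) = (lam / 2) * (a + b) := by
        rw [hc]; field_simp
      linarith
    nlinarith [mul_le_mul_of_nonneg_left hpen (le_of_lt hlam)]
  have hfinal : (1 / (n : ℝ)) * Q + lam * b ≤ 3 * lam * a := by
    have h7 : (1 / (n : ℝ)) * Q = 2 * (c * Q) := by rw [hc]; field_simp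
    linarith
  refine ⟨hfinal, ?_⟩
  have h8 : lam * b ≤ lam * (3 * a) := by
    have h9 : 0 ≤ (1 / (n : ℝ)) * Q := by positivity
    linarith
  exact le_of_mul_le_mul_left (by linarith [h8]) hlam
end

section
/- Let n, d be positive natural numbers, W ∈ ℝ^{n×d}, θ* ∈ ℝ^d, ξ ∈ ℝⁿ, and y = Wθ* + ξ. Let J ⊆ {1,…,d} and λ > 0 satisfy λ ≥ (2/n)·‖Wᵀξ‖_∞. Suppose θ̂ minimizes θ ↦ (1/(2n))‖y − Wθ‖₂² + λ‖θ_J‖₁ over ℝ^d. Set S = {j ∈ J : θ*_j ≠ 0} ∪ Jᶜ and Δ = θ̂ − θ*. Assume the restricted eigenvalue condition: there exists φ₀ > 0 such that vᵀ(WᵀW/n)v ≥ φ₀²‖v‖₂² for every v in the cone C(S,3). Then (1/n)‖WΔ‖₂² + 2λ‖Δ‖₁ ≤ 16 λ² |S| / φ₀², and in particular ‖θ̂ − θ*‖₁ ≤ 8 λ |S| / φ₀². -/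
open Matrix Finset

lemma lasso_poly_helper (q lam a b s φ : ℝ) (hq : 0 ≤ q) (hlam : 0 < lam)
    (ha : 0 ≤ a) (hb : 0 ≤ b) (hs : 0 ≤ s) (hφ : 0 < φ)
    (hkey : q + lam * (a + b) ≤ 4 * lam * a) (h2c : φ ^ 2 * a ^ 2 ≤ s * q) :
    (q + 2 * lam * (a + b)) * φ ^ 2 ≤ 16 * lam ^ 2 * s := by
  rcases hq.eq_or_lt with h | h
  · -- q = 0
    have haz : φ ^ 2 * a ^ 2 ≤ 0 := by rw [← h, mul_zero] at h2c; exact h2c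
    have ha2 : a ^ 2 ≤ 0 := by nlinarith [haz, mul_pos hφ hφ]
    have ha' : a = 0 := by nlinarith [sq_nonneg a]
    have h4 : lam * (a + b) ≤ lam * (4 * a) := by nlinarith
    have h5 : a + b ≤ 4 * a := le_of_mul_le_mul_left h4 hlam
    have hb' : b = 0 := le_antisymm (by linarith) hb
    rw [← h, ha', hb']
    nlinarith [mul_pos hlam hlam, hs]
  · nlinarith [mul_nonneg (mul_nonneg h.le (sq_nonneg φ)) (sub_nonneg.2 hkey),
      mul_nonneg (sq_nonneg φ) (sq_nonneg (4 * lam * a - q)),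
      mul_nonneg (mul_nonneg hlam.le hlam.le) (sub_nonneg.2 h2c), h]

set_option maxHeartbeats 1000000 in
/-- Deterministic ℓ₁ oracle inequality for the partially penalized Lasso under a
restricted eigenvalue condition: `(1/n)‖WΔ‖₂² + 2λ‖Δ‖₁ ≤ 16λ²|S|/φ₀²`, and in
particular `‖θ̂ − θ*‖₁ ≤ 8λ|S|/φ₀²`. -/
theorem lasso_l1_oracle_inequality
    (n d : ℕ) (hn : 0 < n) (hd : 0 < d)
    (W : Matrix (Fin n) (Fin d) ℝ) (θstar : Fin d → ℝ) (ξ : Fin n → ℝ)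
    (y : Fin n → ℝ) (hy : y = W *ᵥ θstar + ξ)
    (J : Finset (Fin d)) (lam : ℝ) (hlam : 0 < lam)
    (hlam_ge : (2 / (n : ℝ)) * (⨆ j : Fin d, |(Wᵀ *ᵥ ξ) j|) ≤ lam)
    (θhat : Fin d → ℝ)
    (hmin : ∀ θ : Fin d → ℝ,
      (1 / (2 * (n : ℝ))) * (∑ i, ((y - W *ᵥ θhat) i) ^ 2) + lam * (∑ j ∈ J, |θhat j|)
        ≤ (1 / (2 * (n : ℝ))) * (∑ i, ((y - W *ᵥ θ) i) ^ 2) + lam * (∑ j ∈ J, |θ j|))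
    (S : Finset (Fin d)) (hS : S = (J.filter fun j => θstar j ≠ 0) ∪ Jᶜ)
    (Δ : Fin d → ℝ) (hΔ : Δ = θhat - θstar)
    (φ₀ : ℝ) (hφ₀ : 0 < φ₀)
    (hRE : ∀ v : Fin d → ℝ, (∑ j ∈ Sᶜ, |v j|) ≤ 3 * (∑ j ∈ S, |v j|) →
      φ₀ ^ 2 * (∑ j, (v j) ^ 2) ≤ v ⬝ᵥ (((Wᵀ * W) *ᵥ v)) / n) :
    (1 / (n : ℝ)) * (∑ i, ((W *ᵥ Δ) i) ^ 2) + 2 * lam * (∑ j, |Δ j|)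
        ≤ 16 * lam ^ 2 * S.card / φ₀ ^ 2 ∧
    (∑ j, |θhat j - θstar j|) ≤ 8 * lam * S.card / φ₀ ^ 2 := by
  have hn' : (0:ℝ) < n := by exact_mod_cast hn
  set Q : ℝ := ∑ i, ((W *ᵥ Δ) i) ^ 2 with hQdef
  set a : ℝ := ∑ j ∈ S, |Δ j| with hadef
  set b : ℝ := ∑ j ∈ Sᶜ, |Δ j| with hbdef
  set A : ℝ := ∑ i, (ξ i) ^ 2 with hAdef
  set B : ℝ := ∑ i, ξ i * (W *ᵥ Δ) i with hBdef
  have ha0 : 0 ≤ a := Finset.sum_nonneg fun j _ => abs_nonneg _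
  have hb0 : 0 ≤ b := Finset.sum_nonneg fun j _ => abs_nonneg _
  have hQ0 : 0 ≤ Q := Finset.sum_nonneg fun i _ => sq_nonneg _
  have hs0 : (0:ℝ) ≤ (S.card : ℝ) := Nat.cast_nonneg _
  have hsum : (∑ j, |Δ j|) = a + b := (Finset.sum_add_sum_compl S _).symm
  -- residual identity
  have hθ : θhat = θstar + Δ := by funext j; simp [hΔ]
  have hres : y - W *ᵥ θhat = ξ - W *ᵥ Δ := by
    rw [hy, hθ, Matrix.mulVec_add]; abel
  have h0 : y - W *ᵥ θstar = ξ := by rw [hy]; abel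
  -- expansion of squared residual
  have hexp : (∑ i, ((ξ - W *ᵥ Δ) i) ^ 2) = A - 2 * B + Q := by
    have e : ∀ i, ((ξ - W *ᵥ Δ) i) ^ 2
        = (ξ i) ^ 2 - 2 * (ξ i * (W *ᵥ Δ) i) + ((W *ᵥ Δ) i) ^ 2 := fun i => by
      simp [Pi.sub_apply]; ring
    rw [Finset.sum_congr rfl fun i _ => e i, Finset.sum_add_distrib,
      Finset.sum_sub_distrib, ← Finset.mul_sum]
  -- B as dot product with Wᵀξ
  have hBdot : B = ∑ j, (Wᵀ *ᵥ ξ) j * Δ j := by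
    have h1 : ξ ⬝ᵥ (W *ᵥ Δ) = (Wᵀ *ᵥ ξ) ⬝ᵥ Δ := by
      rw [Matrix.dotProduct_mulVec, Matrix.mulVec_transpose]
    simpa [dotProduct] using h1
  -- sup-norm bound
  set M : ℝ := ⨆ j : Fin d, |(Wᵀ *ᵥ ξ) j| with hMdef
  have hM : ∀ j, |(Wᵀ *ᵥ ξ) j| ≤ M := by
    intro j
    rw [hMdef]
    exact le_ciSup (f := fun j : Fin d => |(Wᵀ *ᵥ ξ) j|)
      (Set.Finite.bddAbove (Set.finite_range _)) j
  have hMlam : M ≤ (n:ℝ) * lam / 2 := by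
    rw [div_mul_eq_mul_div, div_le_iff₀ hn'] at hlam_ge
    linarith
  have hB : B ≤ ((n:ℝ) * lam / 2) * (a + b) := by
    have h1 : B ≤ M * (a + b) := by
      rw [hBdot, ← hsum, Finset.mul_sum]
      refine Finset.sum_le_sum fun j _ => ?_
      calc (Wᵀ *ᵥ ξ) j * Δ j ≤ |(Wᵀ *ᵥ ξ) j * Δ j| := le_abs_self _
        _ = |(Wᵀ *ᵥ ξ) j| * |Δ j| := abs_mul _ _
        _ ≤ M * |Δ j| := mul_le_mul_of_nonneg_right (hM j) (abs_nonneg _)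
    calc B ≤ M * (a + b) := h1
      _ ≤ ((n:ℝ) * lam / 2) * (a + b) :=
        mul_le_mul_of_nonneg_right hMlam (by linarith)
  -- membership in Sᶜ
  have hScmem : ∀ j, j ∈ Sᶜ ↔ (j ∈ J ∧ θstar j = 0) := by
    intro j
    simp only [Finset.mem_compl, hS, Finset.mem_union, Finset.mem_filter, not_or, not_and,
      not_not]
    tauto
  -- penalty decomposition
  have hg : (∑ j ∈ J, |θstar j|) - (∑ j ∈ J, |θhat j|) ≤ a - b := by
    have hsplit := Finset.sum_filter_add_sum_filter_not J (fun j => j ∈ S)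
      (fun j => |θstar j| - |θhat j|)
    have hfilter_eq : J.filter (fun j => j ∉ S) = Sᶜ := by
      ext j
      simp only [Finset.mem_filter, Finset.mem_compl]
      constructor
      · exact fun h => h.2
      · exact fun h => ⟨((hScmem j).1 (Finset.mem_compl.2 h)).1, h⟩
    have part1 : (∑ j ∈ J.filter (fun j => j ∈ S), (|θstar j| - |θhat j|)) ≤ a := by
      calc (∑ j ∈ J.filter (fun j => j ∈ S), (|θstar j| - |θhat j|))
          ≤ ∑ j ∈ J.filter (fun j => j ∈ S), |Δ j| := by
            refine Finset.sum_le_sum fun j _ => ?_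
            have h1 := abs_sub_abs_le_abs_sub (θstar j) (θhat j)
            have e : |θstar j - θhat j| = |Δ j| := by
              rw [hΔ]; simp [Pi.sub_apply, abs_sub_comm]
            linarith [e ▸ h1]
        _ ≤ a := Finset.sum_le_sum_of_subset_of_nonneg
            (fun j hj => (Finset.mem_filter.1 hj).2) (fun j _ _ => abs_nonneg _)
    have part2 : (∑ j ∈ J.filter (fun j => j ∉ S), (|θstar j| - |θhat j|)) = -b := by
      rw [hfilter_eq]
      have e : ∀ j ∈ Sᶜ, |θstar j| - |θhat j| = -(|Δ j|) := by
        intro j hj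
        obtain ⟨hjJ, h0'⟩ := (hScmem j).1 hj
        rw [hΔ]; simp [Pi.sub_apply, h0']
      rw [Finset.sum_congr rfl e, Finset.sum_neg_distrib]
    have hdist : (∑ j ∈ J, (|θstar j| - |θhat j|))
        = (∑ j ∈ J, |θstar j|) - (∑ j ∈ J, |θhat j|) := Finset.sum_sub_distrib _ _
    linarith [hsplit, part1, part2, hdist]
  -- basic inequality
  have hbasic := hmin θstar
  rw [hres, h0, hexp] at hbasic
  have e1 : (1 / (2 * (n:ℝ))) * (A - 2 * B + Q)
      = (1 / (2 * (n:ℝ))) * A - B / (n:ℝ) + Q / (2 * (n:ℝ)) := by ring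
  have h2 : Q / (2 * (n:ℝ)) ≤ B / (n:ℝ)
      + lam * ((∑ j ∈ J, |θstar j|) - (∑ j ∈ J, |θhat j|)) := by
    rw [e1] at hbasic; linarith [hbasic]
  have hBn : B / (n:ℝ) ≤ lam / 2 * (a + b) := by
    rw [div_le_iff₀ hn']
    calc B ≤ ((n:ℝ) * lam / 2) * (a + b) := hB
      _ = lam / 2 * (a + b) * (n:ℝ) := by ring
  have hglam : lam * ((∑ j ∈ J, |θstar j|) - (∑ j ∈ J, |θhat j|)) ≤ lam * (a - b) :=
    mul_le_mul_of_nonneg_left hg hlam.le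
  have hq_eq : Q / (n:ℝ) = 2 * (Q / (2 * (n:ℝ))) := by ring
  have hkey : Q / (n:ℝ) + lam * (a + b) ≤ 4 * lam * a := by
    rw [hq_eq]; linarith
  have hq0 : 0 ≤ Q / (n:ℝ) := div_nonneg hQ0 hn'.le
  -- cone condition
  have hcone : b ≤ 3 * a := by nlinarith [hkey, hq0, hlam]
  -- restricted eigenvalue
  have hre := hRE Δ hcone
  have hidQ : Δ ⬝ᵥ ((Wᵀ * W) *ᵥ Δ) = Q := by
    rw [← Matrix.mulVec_mulVec, Matrix.dotProduct_mulVec, Matrix.vecMul_transpose]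
    simp [dotProduct, hQdef, sq]
  rw [hidQ] at hre
  set t2 : ℝ := ∑ j, (Δ j) ^ 2 with ht2def
  have ht20 : 0 ≤ t2 := Finset.sum_nonneg fun j _ => sq_nonneg _
  -- Cauchy-Schwarz
  have hcs : a ^ 2 ≤ (S.card : ℝ) * t2 := by
    have h1 : a ^ 2 ≤ (S.card : ℝ) * ∑ j ∈ S, (Δ j) ^ 2 := by
      have := sq_sum_le_card_mul_sum_sq (s := S) (f := fun j => |Δ j|)
      simpa [sq_abs] using this
    have h2' : (∑ j ∈ S, (Δ j) ^ 2) ≤ t2 :=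
      Finset.sum_le_sum_of_subset_of_nonneg (Finset.subset_univ S) (fun _ _ _ => sq_nonneg _)
    calc a ^ 2 ≤ (S.card : ℝ) * ∑ j ∈ S, (Δ j) ^ 2 := h1
      _ ≤ (S.card : ℝ) * t2 := mul_le_mul_of_nonneg_left h2' hs0
  have h2c : φ₀ ^ 2 * a ^ 2 ≤ (S.card : ℝ) * (Q / (n:ℝ)) := by
    nlinarith [mul_le_mul_of_nonneg_left hcs (sq_nonneg φ₀),
      mul_le_mul_of_nonneg_left hre hs0]
  have hφ2 : (0:ℝ) < φ₀ ^ 2 := by positivity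
  -- main inequality
  have main : (1 / (n:ℝ)) * Q + 2 * lam * (a + b) ≤ 16 * lam ^ 2 * S.card / φ₀ ^ 2 := by
    rw [le_div_iff₀ hφ2]
    have h := lasso_poly_helper (Q / (n:ℝ)) lam a b (S.card : ℝ) φ₀ hq0 hlam ha0 hb0 hs0 hφ₀
      hkey h2c
    have e2 : (1 / (n:ℝ)) * Q = Q / (n:ℝ) := by ring
    nlinarith [h, e2]
  constructor
  · rw [hsum]; exact main
  · have hdelta : (∑ j, |θhat j - θstar j|) = a + b := by
      rw [← hsum]
      refine Finset.sum_congr rfl fun j _ => ?_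
      rw [hΔ]; simp [Pi.sub_apply]
    rw [hdelta]
    have h16 : 2 * lam * (a + b) ≤ 16 * lam ^ 2 * S.card / φ₀ ^ 2 := by
      have hQn : 0 ≤ (1 / (n:ℝ)) * Q := by positivity
      linarith [main]
    calc a + b = (2 * lam * (a + b)) / (2 * lam) := by field_simp
      _ ≤ (16 * lam ^ 2 * S.card / φ₀ ^ 2) / (2 * lam) := by
          apply div_le_div_of_nonneg_right h16 (by linarith) -- maybe wrong name
      _ = 8 * lam * S.card / φ₀ ^ 2 := by
          rw [div_div, div_eq_div_iff (by positivity) (by positivity)]; ring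
end

section
/- Let d be a positive natural number, A, B ∈ ℝ^{d×d}, S ⊆ {1,…,d}, and let v ∈ ℝ^d be a nonzero vector satisfying the cone condition ‖v_{Sᶜ}‖₁ ≤ 3‖v_S‖₁. Then vᵀAv / ‖v‖₂² ≥ vᵀBv / ‖v‖₂² − 16 |S| · ‖A − B‖_max. -/
/-!
Expanding `vᵀ(B - A)v` entrywise bounds it by `‖A - B‖_max ‖v‖₁²`. On the cone the `ℓ₁` mass
outside `S` is at most three times the mass on `S`, so `‖v‖₁ ≤ 4 ‖v_S‖₁ ≤ 4 √|S| ‖v‖₂` by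
Cauchy–Schwarz on `S`; dividing by `‖v‖₂²` gives the bound.
-/

open Matrix Finset

theorem abs_dotProduct_mulVec_le {m n : Type*} [Fintype m] [Fintype n] (C : Matrix m n ℝ)
    (u : m → ℝ) (w : n → ℝ) {M : ℝ} (hC : ∀ i j, |C i j| ≤ M) :
    |u ⬝ᵥ (C *ᵥ w)| ≤ M * (∑ i, |u i|) * ∑ j, |w j| := by
  have hexpand : u ⬝ᵥ (C *ᵥ w) = ∑ i, ∑ j, u i * C i j * w j := by
    simp only [dotProduct, mulVec, Finset.mul_sum, mul_assoc]
  calc |u ⬝ᵥ (C *ᵥ w)| ≤ ∑ i, ∑ j, |u i * C i j * w j| := by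
        rw [hexpand]
        exact (abs_sum_le_sum_abs _ _).trans (sum_le_sum fun i _ => abs_sum_le_sum_abs _ _)
    _ ≤ ∑ i, ∑ j, |u i| * M * |w j| := by
        gcongr with i _ j _
        rw [abs_mul, abs_mul]
        gcongr
        exact hC i j
    _ = M * (∑ i, |u i|) * ∑ j, |w j| := by
        simp only [← sum_mul, ← mul_sum]
        ring

theorem abs_le_iSup_iSup_abs {m n : Type*} [Finite m] [Finite n] (C : Matrix m n ℝ) (i : m) (j : n) :
    |C i j| ≤ ⨆ i, ⨆ j, |C i j| :=
  (le_ciSup (Set.finite_range _).bddAbove j).trans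
    (le_ciSup (f := fun i => ⨆ j, |C i j|) (Set.finite_range _).bddAbove i)

theorem sq_sum_abs_le_of_cone {ι : Type*} [Fintype ι] [DecidableEq ι] (S : Finset ι) (v : ι → ℝ) {c : ℝ}
    (hcone : ∑ j ∈ Sᶜ, |v j| ≤ c * ∑ j ∈ S, |v j|) :
    (∑ j, |v j|) ^ 2 ≤ (1 + c) ^ 2 * #S * ∑ j, v j ^ 2 := by
  have hsplit : ∑ j, |v j| ≤ (1 + c) * ∑ j ∈ S, |v j| := by
    rw [← sum_add_sum_compl S]
    linarith
  have hS : (∑ j ∈ S, |v j|) ^ 2 ≤ #S * ∑ j, v j ^ 2 :=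
    calc (∑ j ∈ S, |v j|) ^ 2 ≤ #S * ∑ j ∈ S, |v j| ^ 2 := sq_sum_le_card_mul_sum_sq
      _ ≤ #S * ∑ j, v j ^ 2 := by
        simp only [sq_abs]
        gcongr
        exact subset_univ S
  calc (∑ j, |v j|) ^ 2 ≤ ((1 + c) * ∑ j ∈ S, |v j|) ^ 2 :=
        pow_le_pow_left₀ (sum_nonneg fun j _ => abs_nonneg _) hsplit 2
    _ = (1 + c) ^ 2 * (∑ j ∈ S, |v j|) ^ 2 := by ring
    _ ≤ (1 + c) ^ 2 * #S * ∑ j, v j ^ 2 := by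
        rw [mul_assoc]
        gcongr

theorem cone_quadratic_form_perturbation_general
    (d : ℕ)
    (A B : Matrix (Fin d) (Fin d) ℝ)
    (S : Finset (Fin d)) (v : Fin d → ℝ)
    (hcone : (∑ j ∈ Sᶜ, |v j|) ≤ 3 * (∑ j ∈ S, |v j|)) :
    v ⬝ᵥ (B *ᵥ v) / (∑ j, (v j) ^ 2)
        - 16 * S.card * (⨆ i : Fin d, ⨆ j : Fin d, |A i j - B i j|)
      ≤ v ⬝ᵥ (A *ᵥ v) / (∑ j, (v j) ^ 2) := by
  set M := ⨆ i : Fin d, ⨆ j : Fin d, |A i j - B i j|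
  have hM : 0 ≤ M := Real.iSup_nonneg fun i => Real.iSup_nonneg fun j => abs_nonneg _
  have hentry : ∀ i j, |(B - A) i j| ≤ M := fun i j => by
    simpa only [Matrix.sub_apply, abs_sub_comm] using abs_le_iSup_iSup_abs (A - B) i j
  have hdiff : v ⬝ᵥ (B *ᵥ v) - v ⬝ᵥ (A *ᵥ v) ≤ 16 * #S * M * ∑ j, v j ^ 2 :=
    calc v ⬝ᵥ (B *ᵥ v) - v ⬝ᵥ (A *ᵥ v) = v ⬝ᵥ ((B - A) *ᵥ v) := by
          rw [sub_mulVec, dotProduct_sub]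
      _ ≤ M * (∑ j, |v j|) * ∑ j, |v j| :=
          (le_abs_self _).trans (abs_dotProduct_mulVec_le _ _ _ hentry)
      _ ≤ M * ((1 + 3) ^ 2 * #S * ∑ j, v j ^ 2) := by
          rw [mul_assoc, ← sq]
          exact mul_le_mul_of_nonneg_left (sq_sum_abs_le_of_cone S v hcone) hM
      _ = 16 * #S * M * ∑ j, v j ^ 2 := by ring
  -- `div_le_of_le_mul₀` also covers `∑ j, v j ^ 2 = 0`, where both quotients are `x / 0 = 0`.
  have hquot := div_le_of_le_mul₀ (sum_nonneg fun j _ => sq_nonneg (v j)) (by positivity) hdiff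
  rw [sub_div] at hquot
  linarith

/-- Quadratic-form perturbation bound over cone-restricted directions:
`vᵀAv/‖v‖₂² ≥ vᵀBv/‖v‖₂² − 16|S|‖A − B‖_max`. -/
theorem cone_quadratic_form_perturbation
    (d : ℕ) (hd : 0 < d)
    (A B : Matrix (Fin d) (Fin d) ℝ)
    (S : Finset (Fin d)) (v : Fin d → ℝ) (hv : v ≠ 0)
    (hcone : (∑ j ∈ Sᶜ, |v j|) ≤ 3 * (∑ j ∈ S, |v j|)) :
    v ⬝ᵥ (B *ᵥ v) / (∑ j, (v j) ^ 2)
        - 16 * S.card * (⨆ i : Fin d, ⨆ j : Fin d, |A i j - B i j|)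
      ≤ v ⬝ᵥ (A *ᵥ v) / (∑ j, (v j) ^ 2) :=
  cone_quadratic_form_perturbation_general d A B S v hcone
end

section
/- Let n, p be positive natural numbers with p ≥ 2, and let Û ∈ ℝ^{n×p} with columns û₁,…,û_p. For each j ∈ {1,…,p}, let λ_j > 0 and suppose γ̂_j ∈ ℝ^{p−1} minimizes γ ↦ (1/(2n))‖û_j − Û_{−j}γ‖₂² + λ_j‖γ‖₁ over ℝ^{p−1}, where Û_{−j} is Û with column j removed. Define τ̂_j² = (1/n)‖û_j − Û_{−j}γ̂_j‖₂² + λ_j‖γ̂_j‖₁ and assume τ̂_j² > 0 for every j. Define Ĉ ∈ ℝ^{p×p} by Ĉ_{jj} = 1 and Ĉ_{jk} = −(γ̂_j)_k for k ≠ j, set Ω̃ = T̂⁻²Ĉ where T̂² = diag(τ̂₁²,…,τ̂_p²), and set Σ̂_U = n⁻¹ÛᵀÛ. Then ‖Ω̃Σ̂_U − I_p‖_max ≤ max_{j∈{1,…,p}} λ_j / τ̂_j². -/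
lemma small_t_le {x C B δ : ℝ} (hB : 0 ≤ B) (hδ : 0 < δ)
    (h : ∀ t : ℝ, 0 < t → t ≤ δ → x ≤ t * B + C) : x ≤ C := by
  refine le_of_forall_pos_le_add fun ε hε => ?_
  have hB1 : (0:ℝ) < B + 1 := by linarith
  have ht0 : 0 < min δ (ε / (B + 1)) := lt_min hδ (by positivity)
  have h2 : min δ (ε / (B + 1)) * B ≤ ε := by
    calc min δ (ε / (B + 1)) * B ≤ (ε / (B + 1)) * B :=
          mul_le_mul_of_nonneg_right (min_le_right _ _) hB
      _ ≤ ε := by rw [div_mul_eq_mul_div, div_le_iff₀ hB1]; nlinarith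
  linarith [h _ ht0 (min_le_left _ _)]

lemma kkt_core {ι : Type*} [Fintype ι] [DecidableEq ι] {n : ℕ} {N lam : ℝ} (hN : 0 < N) (hlam : 0 < lam)
    (u : Fin n → ℝ) (V : Fin n → ι → ℝ) (g : ι → ℝ)
    (hmin : ∀ γ : ι → ℝ,
      (1/(2*N)) * (∑ i, (u i - ∑ k, V i k * g k)^2) + lam * ∑ k, |g k|
        ≤ (1/(2*N)) * (∑ i, (u i - ∑ k, V i k * γ k)^2) + lam * ∑ k, |γ k|)
    (k : ι) :
    |∑ i, (u i - ∑ m, V i m * g m) * V i k| ≤ N * lam ∧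
      g k * (∑ i, (u i - ∑ m, V i m * g m) * V i k) = N * lam * |g k| := by
  have hB : (0:ℝ) ≤ ∑ i, (V i k)^2 := Finset.sum_nonneg fun i _ => sq_nonneg _
  have key : ∀ t : ℝ,
      t * (∑ i, (u i - ∑ m, V i m * g m) * V i k)
        ≤ t^2 * (∑ i, (V i k)^2) / 2 + N * lam * (|g k + t| - |g k|) := by
    intro t
    have h := hmin (fun m => g m + if m = k then t else 0)
    have hs1 : ∀ i, (∑ m, V i m * (g m + if m = k then t else 0))
        = (∑ m, V i m * g m) + V i k * t := by
      intro i
      simp [mul_add, Finset.sum_add_distrib, mul_ite, mul_zero, Finset.sum_ite_eq']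
    have hs2 : (∑ m, |g m + if m = k then t else 0|)
        = (∑ m, |g m|) + (|g k + t| - |g k|) := by
      have e : ∀ m, |g m + if m = k then t else 0|
          = |g m| + (if m = k then |g k + t| - |g k| else 0) := by
        intro m; by_cases hmk : m = k
        · subst hmk; simp
        · simp [hmk]
      simp [e, Finset.sum_add_distrib, Finset.sum_ite_eq']
    simp only [hs1, hs2] at h
    have hsum : ∑ i, (u i - ((∑ m, V i m * g m) + V i k * t))^2
        = (∑ i, (u i - ∑ m, V i m * g m)^2)
          - 2*t*(∑ i, (u i - ∑ m, V i m * g m) * V i k) + t^2 * (∑ i, (V i k)^2) := by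
      rw [Finset.mul_sum, Finset.mul_sum, ← Finset.sum_sub_distrib, ← Finset.sum_add_distrib]
      exact Finset.sum_congr rfl fun i _ => by ring
    rw [hsum] at h
    set SA := ∑ i, (u i - ∑ m, V i m * g m)^2
    set D := ∑ i, (u i - ∑ m, V i m * g m) * V i k
    set SB := ∑ i, (V i k)^2
    set Δ := |g k + t| - |g k|
    have h2 : (1/(2*N)) * (SA - 2*t*D + t^2*SB) - (1/(2*N)) * SA
        = (t^2*SB - 2*t*D) / (2*N) := by ring
    have h3 : 0 ≤ (t^2*SB - 2*t*D)/(2*N) + lam * Δ := by linarith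
    have h4 : (t^2*SB - 2*t*D) + 2*N*(lam*Δ)
        = (2*N) * ((t^2*SB - 2*t*D)/(2*N) + lam * Δ) := by field_simp
    have h5 : 0 ≤ (t^2*SB - 2*t*D) + 2*N*(lam*Δ) := by
      rw [h4]; exact mul_nonneg (by positivity) h3
    clear_value SA D SB Δ
    linarith
  set D := ∑ i, (u i - ∑ m, V i m * g m) * V i k with hD
  set SB := ∑ i, (V i k)^2 with hSB
  have h1 : D ≤ N * lam := by
    refine small_t_le (B := SB/2) (δ := 1) (by positivity) one_pos fun t ht _ => ?_
    have hk := key t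
    have habs : |g k + t| - |g k| ≤ t := by
      have := abs_add_le (g k) t
      rw [abs_of_pos ht] at this; linarith [this]
    have h' : t * D ≤ t * (t * (SB/2) + N * lam) := by nlinarith [mul_le_mul_of_nonneg_left habs (le_of_lt (mul_pos hN hlam))]
    exact le_of_mul_le_mul_left h' ht
  have h1' : -D ≤ N * lam := by
    refine small_t_le (B := SB/2) (δ := 1) (by positivity) one_pos fun t ht _ => ?_
    have hk := key (-t)
    have habs : |g k + -t| - |g k| ≤ t := by
      have := abs_sub_abs_le_abs_sub (g k + -t) (g k)
      simp only [add_sub_cancel_left] at this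
      rw [abs_neg, abs_of_pos ht] at this; linarith
    have h' : t * (-D) ≤ t * (t * (SB/2) + N * lam) := by
      nlinarith [mul_le_mul_of_nonneg_left habs (le_of_lt (mul_pos hN hlam))]
    exact le_of_mul_le_mul_left h' ht
  refine ⟨abs_le.2 ⟨by linarith, h1⟩, ?_⟩
  rcases lt_trichotomy (g k) 0 with hg | hg | hg
  · -- g k < 0 : D = -N*lam
    have h2 : N * lam ≤ -D := by
      refine small_t_le (B := SB/2) (δ := -(g k)) (by positivity) (by linarith) fun t ht htd => ?_
      have hk := key t
      have habs : |g k + t| - |g k| = -t := by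
        rw [abs_of_nonpos (by linarith), abs_of_neg hg]; ring
      rw [habs] at hk
      have h' : t * (N*lam) ≤ t * (t * (SB/2) + -D) := by nlinarith
      linarith [le_of_mul_le_mul_left h' ht]
    have hEq : D = -(N*lam) := by linarith
    rw [hEq, abs_of_neg hg]; ring
  · simp [hg]
  · -- g k > 0 : D = N*lam
    have h2 : N * lam ≤ D := by
      refine small_t_le (B := SB/2) (δ := g k) (by positivity) hg fun t ht htd => ?_
      have hk := key (-t)
      have habs : |g k + -t| - |g k| = -t := by
        rw [abs_of_nonneg (by linarith), abs_of_pos hg]; ring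
      rw [habs] at hk
      have h' : t * (N*lam) ≤ t * (t * (SB/2) + D) := by nlinarith
      linarith [le_of_mul_le_mul_left h' ht]
    have hEq : D = N*lam := by linarith
    rw [hEq, abs_of_pos hg]; ring


lemma diag_helper {ι : Type*} [Fintype ι] {n : ℕ} (u : Fin n → ℝ) (V : Fin n → ι → ℝ) (g : ι → ℝ) :
    ∑ i, (u i - ∑ m, V i m * g m) * u i
      = (∑ i, (u i - ∑ m, V i m * g m)^2)
        + ∑ m, g m * (∑ i, (u i - ∑ m', V i m' * g m') * V i m) := by
  have e : ∀ i : Fin n, (u i - ∑ m, V i m * g m) * u i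
      = (u i - ∑ m, V i m * g m)^2 + ∑ m, g m * ((u i - ∑ m', V i m' * g m') * V i m) := by
    intro i
    have h1 : (u i - ∑ m, V i m * g m) * u i
        = (u i - ∑ m, V i m * g m)^2 + (u i - ∑ m, V i m * g m) * (∑ m, V i m * g m) := by ring
    rw [h1, Finset.mul_sum]
    congr 1
    exact Finset.sum_congr rfl fun m _ => by ring
  rw [Finset.sum_congr rfl fun i _ => e i, Finset.sum_add_distrib]
  congr 1
  rw [Finset.sum_comm]
  exact Finset.sum_congr rfl fun m _ => (Finset.mul_sum _ _ _).symm

open Matrix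

/-- KKT bound for the nodewise-Lasso decorrelating matrix:
`‖Ω̃Σ̂_U − I_p‖_max ≤ max_j λ_j/τ̂_j²`. -/
theorem nodewise_lasso_kkt_bound
    (n p : ℕ) (hn : 0 < n) (hp : 2 ≤ p)
    (Uhat : Matrix (Fin n) (Fin p) ℝ)
    (lam : Fin p → ℝ) (hlam : ∀ j, 0 < lam j)
    (γhat : (j : Fin p) → {k : Fin p // k ≠ j} → ℝ)
    (hmin : ∀ j : Fin p, ∀ γ : {k : Fin p // k ≠ j} → ℝ,
      (1 / (2 * (n : ℝ))) *
          (∑ i, (Uhat i j - ∑ k : {k : Fin p // k ≠ j}, Uhat i k.1 * γhat j k) ^ 2)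
        + lam j * (∑ k : {k : Fin p // k ≠ j}, |γhat j k|)
      ≤ (1 / (2 * (n : ℝ))) *
          (∑ i, (Uhat i j - ∑ k : {k : Fin p // k ≠ j}, Uhat i k.1 * γ k) ^ 2)
        + lam j * (∑ k : {k : Fin p // k ≠ j}, |γ k|))
    (τsq : Fin p → ℝ)
    (hτsq : ∀ j, τsq j =
      (1 / (n : ℝ)) *
          (∑ i, (Uhat i j - ∑ k : {k : Fin p // k ≠ j}, Uhat i k.1 * γhat j k) ^ 2)
        + lam j * (∑ k : {k : Fin p // k ≠ j}, |γhat j k|))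
    (hτpos : ∀ j, 0 < τsq j)
    (Chat : Matrix (Fin p) (Fin p) ℝ)
    (hC : ∀ j k, Chat j k = if h : k = j then 1 else -(γhat j ⟨k, h⟩))
    (Ω : Matrix (Fin p) (Fin p) ℝ)
    (hΩ : Ω = Matrix.diagonal (fun j => (τsq j)⁻¹) * Chat)
    (SigU : Matrix (Fin p) (Fin p) ℝ)
    (hSigU : SigU = (n : ℝ)⁻¹ • (Uhatᵀ * Uhat)) :
    ∀ a b : Fin p, |(Ω * SigU - 1) a b| ≤ ⨆ j : Fin p, lam j / τsq j := by
  have hN : (0:ℝ) < (n:ℝ) := by exact_mod_cast hn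
  -- KKT facts from kkt_core
  have hkkt : ∀ (j : Fin p) (k : {k : Fin p // k ≠ j}),
      |∑ i, (Uhat i j - ∑ m : {m : Fin p // m ≠ j}, Uhat i m.1 * γhat j m) * Uhat i k.1|
          ≤ (n:ℝ) * lam j ∧
        γhat j k * (∑ i, (Uhat i j - ∑ m : {m : Fin p // m ≠ j}, Uhat i m.1 * γhat j m) * Uhat i k.1)
          = (n:ℝ) * lam j * |γhat j k| := by
    intro j k
    have h := kkt_core (ι := {k : Fin p // k ≠ j}) (n := n) hN (hlam j)
      (fun i => Uhat i j) (fun i m => Uhat i m.1) (γhat j) (hmin j) k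
    exact h
  -- entry formula
  have hentry : ∀ a b : Fin p, (Ω * SigU) a b
      = (τsq a)⁻¹ * ((n:ℝ)⁻¹ *
          ∑ i, (Uhat i a - ∑ m : {m : Fin p // m ≠ a}, Uhat i m.1 * γhat a m) * Uhat i b) := by
    intro a b
    rw [hΩ, hSigU]
    have hrow : ∀ i, (∑ k, Chat a k * Uhat i k)
        = Uhat i a - ∑ m : {m : Fin p // m ≠ a}, Uhat i m.1 * γhat a m := by
      intro i
      rw [← Finset.add_sum_erase _ _ (Finset.mem_univ a)]
      have hsub : ∑ k ∈ Finset.univ.erase a, Chat a k * Uhat i k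
          = ∑ m : {m : Fin p // m ≠ a}, Chat a m.1 * Uhat i m.1 := by
        rw [Finset.sum_subtype]
        intro x; simp [Finset.mem_erase]
      rw [hsub, hC a a, dif_pos rfl]
      have e : ∀ m : {m : Fin p // m ≠ a}, Chat a m.1 * Uhat i m.1 = -(Uhat i m.1 * γhat a m) := by
        intro m; rw [hC a m.1, dif_neg m.2]; ring
      rw [Finset.sum_congr rfl fun m _ => e m, Finset.sum_neg_distrib]
      ring
    have hmul : ∀ k, (Matrix.diagonal (fun j => (τsq j)⁻¹) * Chat) a k = (τsq a)⁻¹ * Chat a k := by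
      intro k; rw [Matrix.diagonal_mul]
    simp only [Matrix.mul_apply, Matrix.smul_apply, Matrix.transpose_apply, hmul, smul_eq_mul]
    simp only [← hrow]
    simp only [Finset.sum_mul, Finset.mul_sum]
    rw [Finset.sum_comm]
    exact Finset.sum_congr rfl fun i _ => Finset.sum_congr rfl fun k _ => by ring
  -- diagonal identity
  have hdiag : ∀ a : Fin p,
      (n:ℝ)⁻¹ * (∑ i, (Uhat i a - ∑ m : {m : Fin p // m ≠ a}, Uhat i m.1 * γhat a m) * Uhat i a)
        = τsq a := by
    intro a
    rw [diag_helper (fun i => Uhat i a) (fun i m => Uhat i m.1) (γhat a)]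
    have hsum2 : ∑ m : {m : Fin p // m ≠ a}, γhat a m *
          (∑ i, (Uhat i a - ∑ m' : {m : Fin p // m ≠ a}, Uhat i m'.1 * γhat a m') * Uhat i m.1)
        = (n:ℝ) * lam a * ∑ m : {m : Fin p // m ≠ a}, |γhat a m| := by
      rw [Finset.mul_sum]
      exact Finset.sum_congr rfl fun m _ => (hkkt a m).2
    rw [hsum2, hτsq a]
    have hne : (n:ℝ) ≠ 0 := ne_of_gt hN
    field_simp
  -- conclusion
  have hBdd : BddAbove (Set.range fun j : Fin p => lam j / τsq j) :=
    Set.Finite.bddAbove (Set.finite_range _)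
  intro a b
  have hle : lam a / τsq a ≤ ⨆ j : Fin p, lam j / τsq j := le_ciSup hBdd a
  by_cases hab : b = a
  · subst hab
    rw [Matrix.sub_apply, Matrix.one_apply_eq, hentry, hdiag,
      inv_mul_cancel₀ (ne_of_gt (hτpos b)), sub_self, abs_zero]
    exact le_trans (le_of_lt (div_pos (hlam b) (hτpos b))) hle
  · rw [Matrix.sub_apply, Matrix.one_apply_ne (Ne.symm hab), hentry, sub_zero]
    have hD := (hkkt a ⟨b, hab⟩).1
    have hτ : (0:ℝ) < (τsq a)⁻¹ := inv_pos.2 (hτpos a)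
    rw [abs_mul, abs_mul, abs_of_pos hτ, abs_of_pos (inv_pos.2 hN)]
    have : (τsq a)⁻¹ * ((n:ℝ)⁻¹ *
        |∑ i, (Uhat i a - ∑ m : {m : Fin p // m ≠ a}, Uhat i m.1 * γhat a m) * Uhat i b|)
        ≤ (τsq a)⁻¹ * ((n:ℝ)⁻¹ * ((n:ℝ) * lam a)) := by
      have := hD
      gcongr
    refine le_trans this (le_trans (le_of_eq ?_) hle)
    field_simp
end

section
/- Let (Ω, 𝒜, P) be a probability space, 𝓕 ⊆ 𝒜 a sub-σ-algebra, T : Ω → ℝ an 𝓕-measurable random variable, and (P_n)_{n∈ℕ} a sequence of 𝒜-measurable random variables with values in [0,1]. Fix t ∈ [0,1] and suppose that the conditional probabilities converge in L¹: E|P(P_n ≤ t | 𝓕) − t| → 0 as n → ∞, where P(P_n ≤ t | 𝓕) denotes the conditional expectation given 𝓕 of the indicator of the event {P_n ≤ t}. Then for every y ∈ ℝ, P(P_n ≤ t and T ≤ y) → t · P(T ≤ y) as n → ∞. -/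
open MeasureTheory Filter

/-- Asymptotic independence from a sub-σ-algebra (Corollary 1): if the conditional
probabilities `P(Pₙ ≤ t | 𝓕)` converge to `t` in `L¹`, then for every `𝓕`-measurable
`T` and every `y`, `P(Pₙ ≤ t, T ≤ y) → t·P(T ≤ y)`. -/
theorem asymptotic_independence_of_pvalues
    {Ω : Type*} (m : MeasurableSpace Ω) {mΩ : MeasurableSpace Ω} (μ : Measure Ω) [IsProbabilityMeasure μ]
    (hm : m ≤ mΩ)
    (T : Ω → ℝ) (hT : Measurable[m] T)
    (P : ℕ → Ω → ℝ) (hPmeas : ∀ n, Measurable (P n))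
    (hPrange : ∀ n ω, P n ω ∈ Set.Icc (0 : ℝ) 1)
    (t : ℝ) (ht : t ∈ Set.Icc (0 : ℝ) 1)
    (hL1 : Tendsto
      (fun n => ∫ ω, |(μ[Set.indicator {ω' | P n ω' ≤ t} (fun _ => (1 : ℝ)) | m]) ω - t| ∂μ)
      atTop (nhds 0)) :
    ∀ y : ℝ,
      Tendsto (fun n => (μ {ω | P n ω ≤ t ∧ T ω ≤ y}).toReal) atTop
        (nhds (t * (μ {ω | T ω ≤ y}).toReal)) := by
  intro y
  letI : MeasurableSpace Ω := mΩ
  haveI : SigmaFinite (μ.trim hm) := by infer_instance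
  set A : ℕ → Set Ω := fun n => {ω | P n ω ≤ t} with hA
  set B : Set Ω := {ω | T ω ≤ y} with hB
  have hAmeasm : ∀ n, MeasurableSet[mΩ] (A n) := fun n => (hPmeas n) measurableSet_Iic
  have hAmeas : ∀ n, MeasurableSet[mΩ] (A n) := fun n => hAmeasm n
  have hBm : MeasurableSet[m] B := hT measurableSet_Iic
  have hBmeas : MeasurableSet[mΩ] B := hm _ hBm
  set f : ℕ → Ω → ℝ := fun n => μ[Set.indicator (A n) (fun _ => (1 : ℝ)) | m] with hf
  have hind : ∀ n, Integrable (Set.indicator (A n) (fun _ => (1 : ℝ))) μ :=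
    fun n => (integrable_const (1 : ℝ)).indicator (hAmeas n)
  have hfint : ∀ n, Integrable (f n) μ := fun n => integrable_condExp
  -- key identity: μ (A n ∩ B) = ∫_B f n
  have key : ∀ n, (μ {ω | P n ω ≤ t ∧ T ω ≤ y}).toReal = ∫ ω in B, f n ω ∂μ := by
    intro n
    have h1 : ∫ ω in B, f n ω ∂μ
        = ∫ ω in B, Set.indicator (A n) (fun _ => (1 : ℝ)) ω ∂μ :=
      setIntegral_condExp hm (hind n) hBm
    have h2 : ∫ ω in B, Set.indicator (A n) (fun _ => (1 : ℝ)) ω ∂μ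
        = ∫ ω in B ∩ A n, (1 : ℝ) ∂μ := setIntegral_indicator (hAmeas n)
    have h3 : ∫ ω in B ∩ A n, (1 : ℝ) ∂μ = (μ (B ∩ A n)).toReal := by
      simp [setIntegral_const, Measure.real]
    have h4 : {ω | P n ω ≤ t ∧ T ω ≤ y} = B ∩ A n := by
      ext ω; simp [hA, hB, and_comm]
    rw [h1, h2, h3, h4]
  have keyt : t * (μ B).toReal = ∫ _ in B, t ∂μ := by
    simp [setIntegral_const, mul_comm, Measure.real]
  -- bound the difference
  have hbound : ∀ n,
      |(μ {ω | P n ω ≤ t ∧ T ω ≤ y}).toReal - t * (μ B).toReal|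
        ≤ ∫ ω, |f n ω - t| ∂μ := by
    intro n
    rw [key n, keyt, ← integral_sub (hfint n).restrict (integrable_const t).restrict]
    have h5 : |∫ ω in B, (f n ω - t) ∂μ| ≤ ∫ ω in B, |f n ω - t| ∂μ := by
      simpa [Real.norm_eq_abs] using
        norm_integral_le_integral_norm (μ := μ.restrict B) (fun ω => f n ω - t)
    have h6 : ∫ ω in B, |f n ω - t| ∂μ ≤ ∫ ω, |f n ω - t| ∂μ :=
      setIntegral_le_integral ((hfint n).sub (integrable_const t)).abs
        (Filter.Eventually.of_forall fun ω => abs_nonneg _)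
    exact h5.trans h6
  have : Tendsto (fun n =>
      |(μ {ω | P n ω ≤ t ∧ T ω ≤ y}).toReal - t * (μ B).toReal|) atTop (nhds 0) :=
    squeeze_zero (fun n => abs_nonneg _) hbound hL1
  have h7 := tendsto_iff_norm_sub_tendsto_zero.2
    (show Tendsto (fun n =>
        ‖(μ {ω | P n ω ≤ t ∧ T ω ≤ y}).toReal - t * (μ B).toReal‖) atTop (nhds 0) by
      simpa [Real.norm_eq_abs] using this)
  simpa [hB] using h7
end
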